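/- Let Q be a natural number, let K₀ and C be real numbers with K₀ ≠ 0, and let f : ℕ → ℝ be such that f(S) ≠ 0 for some S with 0 ≤ S ≤ Q. Suppose that: (i) for every s with 0 ≤ s ≤ Q, the sum over S from s to Q of f(S)·C(S,s)·(2K₀·(Q − S·(s+2)/(s+1) + s/(s+1)) + C) equals 0; and (ii) for every r with 0 ≤ r ≤ Q, the sum over R from r to Q of f(Q−R)·C(R,r)·(2K₀·(Q − R·(r+2)/(r+1) + r/(r+1)) + C) equals 0. Then f(0) = f(1) = ··· = f(Q), i.e. f is constant on {0, 1, ..., Q}; in other words, under optimized coupling the matter distribution is necessarily homogeneous. -/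

import Mathlib

open Finset


lemma choose_id (S s : ℕ) :
    ((s:ℝ)+1) * (S.choose (s+1) : ℝ) = ((S:ℝ) - s) * (S.choose s : ℝ) := by
  rcases le_or_gt s S with h | h
  · have h1 : ((S.choose (s+1) * (s+1) : ℕ) : ℝ) = ((S.choose s * (S - s) : ℕ) : ℝ) := by
      rw [Nat.choose_succ_right_eq]
    push_cast [h] at h1
    linarith
  · rw [Nat.choose_eq_zero_of_lt h, Nat.choose_eq_zero_of_lt (h.trans (Nat.lt_succ_self s))]
    simp

-- recurrence
lemma recur (Q : ℕ) (K₀ C : ℝ) (f : ℕ → ℝ)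
    (h1 : ∀ s : ℕ, s ≤ Q →
      ∑ S ∈ Finset.Icc s Q,
        f S * (Nat.choose S s : ℝ) *
          (2 * K₀ * ((Q : ℝ) - (S : ℝ) * ((s : ℝ) + 2) / ((s : ℝ) + 1) + (s : ℝ) / ((s : ℝ) + 1))
            + C) = 0)
    (s : ℕ) (hs : s ≤ Q) :
    (2*K₀*Q + C - 2*K₀*s) * (∑ S ∈ range (Q+1), f S * (S.choose s : ℝ))
      = 2*K₀*((s:ℝ)+2) * (∑ S ∈ range (Q+1), f S * (S.choose (s+1) : ℝ)) := by
  have hsub : Finset.Icc s Q ⊆ range (Q+1) := by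
    intro x hx; simp only [mem_Icc] at hx; simp [Nat.lt_succ_of_le hx.2]
  have hext : ∑ S ∈ range (Q+1),
      f S * (Nat.choose S s : ℝ) *
        (2 * K₀ * ((Q : ℝ) - (S : ℝ) * ((s : ℝ) + 2) / ((s : ℝ) + 1) + (s : ℝ) / ((s : ℝ) + 1))
          + C) = 0 := by
    rw [← Finset.sum_subset hsub]
    · exact h1 s hs
    · intro x hx hnx
      simp only [mem_Icc, mem_range, not_and, not_le] at hnx hx
      have : x < s := by
        by_contra hc
        exact absurd (Nat.le_of_lt_succ hx) (Nat.not_le.2 (hnx (Nat.le_of_not_lt hc)))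
      rw [Nat.choose_eq_zero_of_lt this]; ring
  have hne : ((s:ℝ)+1) ≠ 0 := by positivity
  calc (2*K₀*Q + C - 2*K₀*s) * (∑ S ∈ range (Q+1), f S * (S.choose s : ℝ))
      = ∑ S ∈ range (Q+1),
          (f S * (Nat.choose S s : ℝ) *
          (2 * K₀ * ((Q : ℝ) - (S : ℝ) * ((s : ℝ) + 2) / ((s : ℝ) + 1) + (s : ℝ) / ((s : ℝ) + 1))
            + C) + 2*K₀*((s:ℝ)+2) * (f S * (S.choose (s+1) : ℝ))) := by
        rw [Finset.mul_sum]
        refine Finset.sum_congr rfl (fun S _ => ?_)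
        have hid := choose_id S s
        field_simp
        linear_combination (-(2*K₀*((s:ℝ)+2)*f S)) * hid
    _ = 2*K₀*((s:ℝ)+2) * (∑ S ∈ range (Q+1), f S * (S.choose (s+1) : ℝ)) := by
        rw [Finset.sum_add_distrib, hext, Finset.mul_sum]; simp

lemma inj_transform (Q : ℕ) (h : ℕ → ℝ)
    (hz : ∀ s ≤ Q, ∑ S ∈ range (Q+1), h S * (S.choose s : ℝ) = 0) :
    ∀ S ≤ Q, h S = 0 := by
  have key : ∀ d : ℕ, ∀ S, S ≤ Q → Q ≤ S + d → h S = 0 := by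
    intro d
    induction d with
    | zero =>
      intro S hSQ hQS
      have hSQ' : S = Q := le_antisymm hSQ (by simpa using hQS)
      subst hSQ'
      have := hz S le_rfl
      rw [Finset.sum_eq_single_of_mem S (by simp [Nat.lt_succ_self])] at this
      · simpa using this
      · intro T hT hne
        have hT' : T < S := lt_of_le_of_ne (Nat.le_of_lt_succ (mem_range.1 hT)) hne
        rw [Nat.choose_eq_zero_of_lt hT']; ring
    | succ d ih =>
      intro S hSQ hQS
      rcases le_or_gt Q (S + d) with hc | hc
      · exact ih S hSQ hc
      · have hQ' : Q = S + d + 1 := le_antisymm hQS hc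
        have := hz S hSQ
        rw [Finset.sum_eq_single_of_mem S (by simp [Nat.lt_succ_of_le hSQ])] at this
        · simpa using this
        · intro T hT hne
          rcases lt_or_gt_of_ne hne with h1 | h1
          · rw [Nat.choose_eq_zero_of_lt h1]; ring
          · have : h T = 0 := ih T (Nat.le_of_lt_succ (mem_range.1 hT)) (by omega)
            rw [this]; ring
  intro S hS
  exact key Q S hS (by omega)

lemma sum_range_choose_eq (n s : ℕ) :
    ∑ S ∈ range (n+1), S.choose s = (n+1).choose (s+1) := by
  rw [← Nat.sum_Icc_choose]
  refine (Finset.sum_subset ?_ ?_).symm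
  · intro x hx
    simp only [mem_Icc] at hx
    exact mem_range.2 (Nat.lt_succ_of_le hx.2)
  · intro x hx hnx
    simp only [mem_Icc, mem_range, not_and, not_le] at hnx hx
    exact Nat.choose_eq_zero_of_lt (by omega)

lemma key (Q : ℕ) (K₀ C : ℝ) (hK : K₀ ≠ 0) (f : ℕ → ℝ)
    (h1 : ∀ s : ℕ, s ≤ Q →
      ∑ S ∈ Finset.Icc s Q,
        f S * (Nat.choose S s : ℝ) *
          (2 * K₀ * ((Q : ℝ) - (S : ℝ) * ((s : ℝ) + 2) / ((s : ℝ) + 1) + (s : ℝ) / ((s : ℝ) + 1))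
            + C) = 0) :
    (∀ S ≤ Q, f S = 0) ∨
      ∃ s₀, s₀ ≤ Q ∧ 2*K₀*(Q:ℝ) + C = 2*K₀*(s₀:ℝ) ∧
        (∀ S ≤ Q, S ≤ s₀ → f S = f 0) ∧ (∀ S ≤ Q, s₀ < S → f S = 0) := by
  set a : ℕ → ℝ := fun s => ∑ S ∈ range (Q+1), f S * (S.choose s : ℝ) with ha
  have hrec : ∀ s ≤ Q, (2*K₀*(Q:ℝ) + C - 2*K₀*(s:ℝ)) * a s = 2*K₀*((s:ℝ)+2) * a (s+1) :=
    fun s hs => recur Q K₀ C f h1 s hs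
  have haQ1 : a (Q+1) = 0 := by
    apply Finset.sum_eq_zero
    intro S hS
    rw [Nat.choose_eq_zero_of_lt (mem_range.1 hS)]; ring
  by_cases hex : ∃ s₀, s₀ ≤ Q ∧ 2*K₀*(Q:ℝ) + C = 2*K₀*(s₀:ℝ)
  · right
    obtain ⟨s₀, hs₀Q, hs₀⟩ := hex
    have hs₀1 : ((s₀:ℝ)+1) ≠ 0 := by positivity
    -- formula for a
    have hform : ∀ s, s ≤ Q → ((s₀:ℝ)+1) * a s = a 0 * ((s₀+1).choose (s+1) : ℝ) := by
      intro s
      induction s with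
      | zero => intro _; rw [Nat.choose_one_right]; push_cast; ring
      | succ s ih =>
        intro hs1
        have hs : s ≤ Q := le_trans (Nat.le_succ s) hs1
        have hR := hrec s hs
        have hprev := ih hs
        have hid := choose_id (s₀+1) (s+1)
        push_cast at hid
        have h2K : (2*K₀*((s:ℝ)+2)) ≠ 0 := by
          apply mul_ne_zero (mul_ne_zero (by norm_num) hK)
          positivity
        apply mul_left_cancel₀ h2K
        linear_combination (-((s₀:ℝ)+1))*hR + ((s₀:ℝ)+1)*(a s)*hs₀ +
          2*K₀*((s₀:ℝ)-(s:ℝ))*hprev - 2*K₀*(a 0)*hid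
    -- f equals the step function
    have hg : ∀ s ≤ Q, ∑ S ∈ range (Q+1),
        (f S - (if S ≤ s₀ then a 0 / ((s₀:ℝ)+1) else 0)) * (S.choose s : ℝ) = 0 := by
      intro s hs
      have hsplit : ∑ S ∈ range (Q+1),
          (f S - (if S ≤ s₀ then a 0 / ((s₀:ℝ)+1) else 0)) * (S.choose s : ℝ)
          = a s - ∑ S ∈ range (Q+1),
              (if S ≤ s₀ then a 0 / ((s₀:ℝ)+1) else 0) * (S.choose s : ℝ) := by
        rw [ha]
        rw [← Finset.sum_sub_distrib]
        refine Finset.sum_congr rfl (fun S _ => by ring)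
      rw [hsplit]
      have hstep : ∑ S ∈ range (Q+1), (if S ≤ s₀ then a 0 / ((s₀:ℝ)+1) else 0) * (S.choose s : ℝ)
          = (a 0 / ((s₀:ℝ)+1)) * (((s₀+1).choose (s+1) : ℕ) : ℝ) := by
        rw [← sum_range_choose_eq s₀ s]
        push_cast
        rw [Finset.mul_sum]
        rw [← Finset.sum_subset (Finset.range_subset_range.2 (Nat.succ_le_succ hs₀Q))]
        · refine Finset.sum_congr rfl (fun S hS => ?_)
          rw [if_pos (Nat.le_of_lt_succ (mem_range.1 hS))]
        · intro x hx hnx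
          simp only [mem_range, not_lt] at hnx
          rw [if_neg (by omega)]
          ring
      rw [hstep]
      have := hform s hs
      field_simp
      linarith [hform s hs]
    have hfg := inj_transform Q _ hg
    refine ⟨s₀, hs₀Q, hs₀, ?_, ?_⟩
    · intro S hSQ hSs₀
      have h1' := hfg S hSQ
      have h2' := hfg 0 (Nat.zero_le Q)
      rw [sub_eq_zero] at h1' h2'
      rw [h1', h2', if_pos hSs₀, if_pos (Nat.zero_le s₀)]
    · intro S hSQ hSs₀
      have h1' := hfg S hSQ
      rw [sub_eq_zero] at h1'
      rw [h1', if_neg (by omega)]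
  · left
    -- all a s = 0 for s ≤ Q+1, downward
    have hz : ∀ d : ℕ, ∀ s, s + d = Q + 1 → a s = 0 := by
      intro d
      induction d with
      | zero => intro s hs; have : s = Q + 1 := by omega
                rw [this]; exact haQ1
      | succ d ih =>
        intro s hs
        have hsQ : s ≤ Q := by omega
        have hR := hrec s hsQ
        rw [ih (s+1) (by omega)] at hR
        have hne : 2*K₀*(Q:ℝ) + C - 2*K₀*(s:ℝ) ≠ 0 := by
          intro hc
          exact hex ⟨s, hsQ, by linarith⟩
        have := mul_eq_zero.1 (by linarith [hR] : (2*K₀*(Q:ℝ) + C - 2*K₀*(s:ℝ)) * a s = 0)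
        tauto
    have hz' : ∀ s ≤ Q, ∑ S ∈ range (Q+1), f S * (S.choose s : ℝ) = 0 := by
      intro s hs
      have := hz (Q + 1 - s) s (by omega)
      rw [ha] at this
      exact this
    exact inj_transform Q f hz'

/-- Under the boundary constraints (4.5a) and (4.6) with `ξ₀ = 1` and `K₀ ≠ 0`,
any nontrivial solution `f` is constant on `{0, 1, …, Q}`: the matter
distribution is necessarily homogeneous. -/
theorem stmt_3 (Q : ℕ) (K₀ C : ℝ) (hK : K₀ ≠ 0) (f : ℕ → ℝ)
    (hf : ∃ S : ℕ, S ≤ Q ∧ f S ≠ 0)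
    (h1 : ∀ s : ℕ, s ≤ Q →
      ∑ S ∈ Finset.Icc s Q,
        f S * (Nat.choose S s : ℝ) *
          (2 * K₀ * ((Q : ℝ) - (S : ℝ) * ((s : ℝ) + 2) / ((s : ℝ) + 1) + (s : ℝ) / ((s : ℝ) + 1))
            + C) = 0)
    (h2 : ∀ r : ℕ, r ≤ Q →
      ∑ R ∈ Finset.Icc r Q,
        f (Q - R) * (Nat.choose R r : ℝ) *
          (2 * K₀ * ((Q : ℝ) - (R : ℝ) * ((r : ℝ) + 2) / ((r : ℝ) + 1) + (r : ℝ) / ((r : ℝ) + 1))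
            + C) = 0) :
    ∀ i : ℕ, i ≤ Q → ∀ j : ℕ, j ≤ Q → f i = f j := by
  obtain ⟨S₀, hS₀Q, hS₀⟩ := hf
  have k1 := key Q K₀ C hK f h1
  have k2 := key Q K₀ C hK (fun R => f (Q - R)) h2
  rcases k1 with hzero | ⟨s₀, hs₀Q, hs₀, hconst, hvanish⟩
  · exact absurd (hzero S₀ hS₀Q) hS₀
  rcases k2 with hzero | ⟨t₀, ht₀Q, ht₀, hconst', hvanish'⟩
  · have : f S₀ = 0 := by
      have := hzero (Q - S₀) (Nat.sub_le Q S₀)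
      simpa [Nat.sub_sub_self hS₀Q] using this
    exact absurd this hS₀
  have hst : s₀ = t₀ := by
    have : (s₀:ℝ) = (t₀:ℝ) := by
      have h4 : 2*K₀*(s₀:ℝ) = 2*K₀*(t₀:ℝ) := by linarith
      have h2K : (2:ℝ)*K₀ ≠ 0 := mul_ne_zero (by norm_num) hK
      exact mul_left_cancel₀ h2K h4
    exact_mod_cast this
  subst hst
  rcases eq_or_lt_of_le hs₀Q with hQ | hQ
  · -- s₀ = Q : f constant
    intro i hi j hj
    rw [hconst i hi (hQ ▸ hi), hconst j hj (hQ ▸ hj)]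
  · -- s₀ < Q : everything vanishes, contradiction
    exfalso
    have hf0 : f 0 = 0 := by
      have := hvanish' Q le_rfl hQ
      simpa using this
    have : f S₀ = 0 := by
      rcases le_or_gt S₀ s₀ with h | h
      · rw [hconst S₀ hS₀Q h, hf0]
      · exact hvanish S₀ hS₀Q h
    exact absurd this hS₀
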